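/- arXiv:2405.00853 — 4 statements merged into one kernel-verified Lean document; each statement's English description precedes it below -/
import Mathlib

section
/- Let G = (V,E) be a finite simple connected graph and H ⊆ V. Then H is a monophonic halfspace of G (i.e., both H and V∖H are m-convex) if and only if the induced subgraphs G[Γ(H)] and G[Γ(V∖H)] are cliques. -/
open SimpleGraph

variable {V : Type*}

/-- A walk is an induced (chordless) path. -/
def IsInducedPath (G : SimpleGraph V) {x y : V} (p : G.Walk x y) : Prop :=
  p.IsPath ∧ ∀ a b : V, a ∈ p.support → b ∈ p.support → G.Adj a b → s(a, b) ∈ p.edges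

/-- The monophonic interval between `u` and `v`: all vertices on some induced
path between `u` and `v` (empty if `u = v`). -/
def mInterval (G : SimpleGraph V) (u v : V) : Set V :=
  {z | u ≠ v ∧ ∃ p : G.Walk u v, IsInducedPath G p ∧ z ∈ p.support}

/-- Monophonic convexity. -/
def MConvex (G : SimpleGraph V) (C : Set V) : Prop :=
  ∀ x ∈ C, ∀ y ∈ C, mInterval G x y ⊆ C

/-- Monophonic halfspace. -/
def IsMHalfspace (G : SimpleGraph V) (H : Set V) : Prop :=
  MConvex G H ∧ MConvex G Hᶜ

/-- The monophonic shadow `u/v`. -/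
def mShadow (G : SimpleGraph V) (u v : V) : Set V :=
  {z | u ∈ mInterval G z v}

/-- The border `Γ(X)`: vertices of `X` with a neighbour outside `X`. -/
def border (G : SimpleGraph V) (X : Set V) : Set V :=
  {x | x ∈ X ∧ ∃ y, y ∉ X ∧ G.Adj x y}

/-- `△⁻uv = N(u) ∩ N(v)`. -/
def triMinus (G : SimpleGraph V) (u v : V) : Set V :=
  G.neighborSet u ∩ G.neighborSet v

/-- `△uv = (N(u) ∩ N(v)) ∪ {u, v}`. -/
def triangleSet (G : SimpleGraph V) (u v : V) : Set V :=
  (G.neighborSet u ∩ G.neighborSet v) ∪ {u, v}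

/-- `□uv`: vertices appearing in some 4-cycle of `G` having `{u,v}` as an edge. -/
def squareSet (G : SimpleGraph V) (u v : V) : Set V :=
  {x | ∃ a b : V, G.Adj v a ∧ G.Adj a b ∧ G.Adj b u ∧
    a ≠ u ∧ a ≠ v ∧ b ≠ u ∧ b ≠ v ∧ a ≠ b ∧ (x = u ∨ x = v ∨ x = a ∨ x = b)}

/-- `A = □uv \ △⁻uv`. -/
def setA (G : SimpleGraph V) (u v : V) : Set V :=
  squareSet G u v \ triMinus G u v

/-- `Aᵘ = {x ∈ A : d(x,u) < d(x,v)}`. -/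
noncomputable def setAu (G : SimpleGraph V) (u v : V) : Set V :=
  {x ∈ setA G u v | G.dist x u < G.dist x v}

/-- `Aᵛ = A \ Aᵘ`. -/
noncomputable def setAv (G : SimpleGraph V) (u v : V) : Set V :=
  setA G u v \ setAu G u v

/-- The graph obtained from `G` by deleting all edges of the induced subgraph `G[S]`. -/
def delInduced (G : SimpleGraph V) (S : Set V) : SimpleGraph V where
  Adj a b := G.Adj a b ∧ ¬(a ∈ S ∧ b ∈ S)
  symm := by
    constructor
    intro a b h
    exact ⟨h.1.symm, fun hc => h.2 ⟨hc.2, hc.1⟩⟩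
  loopless := ⟨fun a h => G.irrefl h.1⟩

/-- The graph `T = G \ E(G[□uv ∪ △⁻uv])`. -/
def graphT (G : SimpleGraph V) (u v : V) : SimpleGraph V :=
  delInduced G (squareSet G u v ∪ triMinus G u v)

/-- The monophonic convex hull of `X`. -/
def mHull (G : SimpleGraph V) (X : Set V) : Set V :=
  ⋂₀ {C | MConvex G C ∧ X ⊆ C}

/-- `S` is an `(a,b)`-separator: every walk from `a` to `b` meets `S`. -/
def IsSeparator (G : SimpleGraph V) (S : Set V) (a b : V) : Prop :=
  ∀ p : G.Walk a b, ∃ s ∈ S, s ∈ p.support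

/-- The cutset `δ(X)` as a set of edges. -/
def cutset (G : SimpleGraph V) (X : Set V) : Set (Sym2 V) :=
  {e | e ∈ G.edgeSet ∧ ∃ a b : V, e = s(a, b) ∧ a ∈ X ∧ b ∉ X}

/-- A family of sets `ℋ` shatters a set `S`. -/
def Shatters (ℋ : Set (Set V)) (S : Set V) : Prop :=
  ∀ T ⊆ S, ∃ H ∈ ℋ, H ∩ S = T

/-- `G` is `S₄` for monophonic convexity: disjoint m-convex sets are
halfspace separable. -/
def IsS4 (G : SimpleGraph V) : Prop :=
  ∀ C₁ C₂ : Set V, MConvex G C₁ → MConvex G C₂ → Disjoint C₁ C₂ →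
    ∃ H : Set V, IsMHalfspace G H ∧ C₁ ⊆ H ∧ C₂ ⊆ Hᶜ

section Helpers
variable {G : SimpleGraph V}


lemma induced_reverse {u v : V} {p : G.Walk u v} (hp : IsInducedPath G p) :
    IsInducedPath G p.reverse := by
  refine ⟨hp.1.reverse, fun a b ha hb hadj => ?_⟩
  rw [Walk.support_reverse, List.mem_reverse] at ha hb
  rw [Walk.edges_reverse, List.mem_reverse]
  exact hp.2 a b ha hb hadj

lemma induced_of_cons {u v w : V} {h : G.Adj u v} {p : G.Walk v w}
    (hp : IsInducedPath G (Walk.cons h p)) : IsInducedPath G p := by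
  refine ⟨hp.1.of_cons, fun a b ha hb hadj => ?_⟩
  have hu : u ∉ p.support := ((Walk.cons_isPath_iff h p).mp hp.1).2
  have := hp.2 a b (by simp [ha]) (by simp [hb]) hadj
  rw [Walk.edges_cons, List.mem_cons] at this
  rcases this with heq | hmem
  · exfalso
    rw [Sym2.eq, Sym2.rel_iff'] at heq
    rcases heq with ⟨rfl, rfl⟩ | ⟨rfl, rfl⟩
    · exact hu ha
    · exact hu hb
  · exact hmem

lemma edge_mem_of_length_one {x y : V} (p : G.Walk x y) (h : p.length = 1) :
    s(x, y) ∈ p.edges := by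
  cases p with
  | nil => simp at h
  | cons hadj q =>
    have hq : q.length = 0 := by simpa using h
    have := Walk.eq_of_length_eq_zero hq
    subst this
    simp


lemma no_cross [DecidableEq V] {x y z : V} {p : G.Walk x y} (hp : p.IsPath)
    (hz : z ∈ p.support) {c : V} (hcq : c ∈ (p.takeUntil z hz).support)
    (hcr : c ∈ (p.dropUntil z hz).support) (hcz : c ≠ z) : False := by
  have hnd : (((p.takeUntil z hz).append (p.dropUntil z hz)).support).Nodup := by
    rw [Walk.take_spec]; exact hp.support_nodup
  rw [Walk.support_append] at hnd
  have hdis := List.disjoint_of_nodup_append hnd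
  refine hdis hcq ?_
  rw [Walk.support_eq_cons (p.dropUntil z hz)] at hcr
  rcases List.mem_cons.mp hcr with rfl | h
  · exact absurd rfl hcz
  · exact h

lemma mem_dropUntil_or [DecidableEq V] {u v x y : V} (p : G.Walk u v) :
    ∀ (hx : x ∈ p.support) (hy : y ∈ p.support),
    y ∈ (p.dropUntil x hx).support ∨ x ∈ (p.dropUntil y hy).support := by
  induction p with
  | nil =>
    intro hx hy
    rw [Walk.mem_support_nil_iff] at hx hy
    subst hx; subst hy
    left; exact Walk.start_mem_support _
  | @cons a b c h q ih =>
    intro hx hy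
    by_cases hax : a = x
    · subst hax
      left
      rw [Walk.dropUntil]
      simp only [dif_pos rfl]
      exact hy
    · by_cases hay : a = y
      · subst hay
        right
        rw [Walk.dropUntil]
        simp only [dif_pos rfl]
        exact hx
      · have hx' : x ∈ q.support := by
          have hx2 := hx
          rw [Walk.support_cons, List.mem_cons] at hx2
          rcases hx2 with h' | h'
          · exact absurd h'.symm hax
          · exact h'
        have hy' : y ∈ q.support := by
          have hy2 := hy
          rw [Walk.support_cons, List.mem_cons] at hy2
          rcases hy2 with h' | h'
          · exact absurd h'.symm hay
          · exact h'
        have e1 : (Walk.cons h q).dropUntil x hx = q.dropUntil x hx' := by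
          rw [Walk.dropUntil]; simp [hax]
        have e2 : (Walk.cons h q).dropUntil y hy = q.dropUntil y hy' := by
          rw [Walk.dropUntil]; simp [hay]
        rw [e1, e2]
        exact ih hx' hy'


lemma length_take_add_drop [DecidableEq V] {u v z : V} (p : G.Walk u v) (hz : z ∈ p.support) :
    (p.takeUntil z hz).length + (p.dropUntil z hz).length = p.length := by
  have := congr_arg Walk.length (p.take_spec hz)
  rwa [Walk.length_append] at this

lemma shorter_of_chord [DecidableEq V] {u v x y : V} (p : G.Walk u v)
    (hx : x ∈ p.support) (hadj : G.Adj x y) (hy : y ∈ (p.dropUntil x hx).support)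
    (hne : s(x, y) ∉ p.edges) : ∃ w : G.Walk u v, w.length < p.length := by
  set r := p.dropUntil x hx with hr
  refine ⟨(p.takeUntil x hx).append (Walk.cons hadj (r.dropUntil y hy)), ?_⟩
  rw [Walk.length_append, Walk.length_cons]
  have h1 := length_take_add_drop p hx
  rw [← hr] at h1
  have h2 := length_take_add_drop r hy
  have h3 : 2 ≤ (r.takeUntil y hy).length := by
    by_contra hcon
    push_neg at hcon
    interval_cases hl : (r.takeUntil y hy).length
    · exact hadj.ne (Walk.eq_of_length_eq_zero hl)
    · exact hne (Walk.edges_dropUntil_subset p hx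
        (Walk.edges_takeUntil_subset r hy (edge_mem_of_length_one _ hl)))
  omega

lemma exists_induced_path {u v : V} (h : G.Reachable u v) :
    ∃ p : G.Walk u v, IsInducedPath G p := by
  classical
  obtain ⟨p₀⟩ := h
  suffices H : ∀ n : ℕ, ∀ {a b : V} (p : G.Walk a b), p.length ≤ n →
      ∃ q : G.Walk a b, IsInducedPath G q from H p₀.length p₀ le_rfl
  intro n
  induction n using Nat.strong_induction_on with
  | _ n ih =>
    intro a b p hn
    by_cases hind : IsInducedPath G p.bypass
    · exact ⟨p.bypass, hind⟩
    · have hpath := p.bypass_isPath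
      rw [IsInducedPath] at hind
      push_neg at hind
      obtain ⟨x, y, hx, hy, hadj, hnedge⟩ := hind hpath
      rcases mem_dropUntil_or p.bypass hx hy with hc | hc
      · obtain ⟨w, hw⟩ := shorter_of_chord p.bypass hx hadj hc hnedge
        have hwlt : w.length < n := lt_of_lt_of_le hw (le_trans p.length_bypass_le hn)
        exact ih w.length hwlt w le_rfl
      · obtain ⟨w, hw⟩ := shorter_of_chord p.bypass hy hadj.symm hc
          (by rwa [Sym2.eq_swap])
        have hwlt : w.length < n := lt_of_lt_of_le hw (le_trans p.length_bypass_le hn)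
        exact ih w.length hwlt w le_rfl


lemma edge_induced {a v : V} (hav : G.Adj a v) :
    IsInducedPath G (Walk.cons hav Walk.nil) := by
  constructor
  · simp [hav.ne]
  · intro c d hc hd hcd
    simp only [Walk.support_cons, Walk.support_nil, List.mem_cons,
      List.mem_singleton, List.not_mem_nil, or_false] at hc hd
    simp only [Walk.edges_cons, Walk.edges_nil, List.mem_singleton]
    rcases hc with rfl | rfl <;> rcases hd with rfl | rfl
    · exact absurd hcd (G.irrefl)
    · rfl
    · rw [Sym2.eq_swap]
    · exact absurd hcd (G.irrefl)

lemma trim {a : V} {v t : V} (P : G.Walk v t) :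
    IsInducedPath G P → a ∉ P.support → (∃ w ∈ P.support, G.Adj a w) →
    ∃ R : G.Walk a v, IsInducedPath G R ∧
      (∀ x ∈ R.support, x = a ∨ x ∈ P.support) ∧ 1 ≤ R.length := by
  induction P with
  | nil =>
    intro _ hna hw
    obtain ⟨w, hwmem, hwadj⟩ := hw
    rw [Walk.mem_support_nil_iff] at hwmem
    subst hwmem
    refine ⟨Walk.cons hwadj Walk.nil, edge_induced hwadj, ?_, by simp⟩
    intro x hx
    simp only [Walk.support_cons, Walk.support_nil, List.mem_cons,
      List.mem_singleton, List.not_mem_nil, or_false] at hx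
    rcases hx with rfl | rfl
    · exact Or.inl rfl
    · exact Or.inr (Walk.start_mem_support _)
  | @cons v v₂ t h P' ih =>
    intro hPind hna hw
    by_cases hav : G.Adj a v
    · refine ⟨Walk.cons hav Walk.nil, edge_induced hav, ?_, by simp⟩
      intro x hx
      simp only [Walk.support_cons, Walk.support_nil, List.mem_cons,
        List.mem_singleton, List.not_mem_nil, or_false] at hx
      rcases hx with rfl | rfl
      · exact Or.inl rfl
      · exact Or.inr (Walk.start_mem_support _)
    · obtain ⟨w, hwmem, hwadj⟩ := hw
      have hw' : w ∈ P'.support := by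
        rw [Walk.support_cons, List.mem_cons] at hwmem
        rcases hwmem with rfl | h'
        · exact absurd hwadj hav
        · exact h'
      have hP' := induced_of_cons hPind
      have hna' : a ∉ P'.support := fun hc => hna (by simp [hc])
      obtain ⟨R', hR'ind, hR'sup, hR'len⟩ := ih hP' hna' ⟨w, hw', hwadj⟩
      have hvP' : v ∉ P'.support := ((Walk.cons_isPath_iff h P').mp hPind.1).2
      have hva : v ≠ a := fun hc => hna (hc ▸ Walk.start_mem_support _)
      have hvR' : v ∉ R'.support := fun hc => by
        rcases hR'sup v hc with h' | h'
        · exact hva h'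
        · exact hvP' h'
      refine ⟨(Walk.cons h R'.reverse).reverse, ?_, ?_, ?_⟩
      · constructor
        · apply Walk.IsPath.reverse
          rw [Walk.cons_isPath_iff]
          exact ⟨hR'ind.1.reverse, by
            rw [Walk.support_reverse, List.mem_reverse]; exact hvR'⟩
        · have hmem : ∀ x, x ∈ (Walk.cons h R'.reverse).reverse.support ↔
              x = v ∨ x ∈ R'.support := by
            intro x
            have hv₂ : v₂ ∈ R'.support := Walk.end_mem_support _
            simp only [Walk.support_reverse, Walk.support_cons, List.mem_reverse,
              List.mem_cons]
            try tauto
          have hedge : ∀ e, e ∈ (Walk.cons h R'.reverse).reverse.edges ↔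
              e = s(v, v₂) ∨ e ∈ R'.edges := by
            intro e
            simp only [Walk.edges_reverse, Walk.edges_cons, List.mem_reverse,
              List.mem_cons]
            try (have hsw : s(v, v₂) = s(v₂, v) := Sym2.eq_swap; tauto)
          have key : ∀ d ∈ R'.support, G.Adj v d → d = v₂ := by
            intro d hd hvd
            rcases hR'sup d hd with rfl | hdP'
            · exact absurd hvd.symm hav
            · have := hPind.2 v d (Walk.start_mem_support _) (by simp [hdP']) hvd
              rw [Walk.edges_cons, List.mem_cons] at this
              rcases this with heq | hmem'
              · rcases Sym2.eq_iff.mp heq with ⟨-, h2⟩ | ⟨h1, -⟩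
                · exact h2
                · exact absurd h1 h.ne
              · exact absurd (Walk.fst_mem_support_of_mem_edges P' hmem') hvP'
          intro c d hc hd hcd
          rw [hmem] at hc hd
          rw [hedge]
          rcases hc with rfl | hc <;> rcases hd with rfl | hd
          · exact absurd hcd (G.irrefl)
          · left; rw [key d hd hcd]
          · left; rw [Sym2.eq_swap, key c hc hcd.symm]
          · exact Or.inr (hR'ind.2 c d hc hd hcd)
      · intro x hx
        rw [Walk.support_reverse, List.mem_reverse, Walk.support_cons,
          List.mem_cons] at hx
        rcases hx with rfl | hx
        · exact Or.inr (Walk.start_mem_support _)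
        · rw [Walk.support_reverse, List.mem_reverse] at hx
          rcases hR'sup x hx with h' | h'
          · exact Or.inl h'
          · exact Or.inr (by simp [h'])
      · simp [Walk.length_reverse, Walk.length_cons]


lemma convex_of_clique_border [DecidableEq V] {H : Set V}
    (hcl : G.IsClique (border G H)) : MConvex G H := by
  intro x hx y hy z hz
  obtain ⟨hne, p, hp, hzp⟩ := hz
  by_contra hzH
  obtain ⟨d1, hd1, hd1f, hd1s⟩ := (p.takeUntil z hzp).exists_boundary_dart H hx hzH
  obtain ⟨d2, hd2, hd2f, hd2s⟩ := (p.dropUntil z hzp).exists_boundary_dart Hᶜ hzH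
    (by simp [hy])
  have hbH : d2.snd ∈ H := by simpa using hd2s
  have haB : d1.fst ∈ border G H := ⟨hd1f, d1.snd, hd1s, d1.adj⟩
  have hbB : d2.snd ∈ border G H := ⟨hbH, d2.fst, hd2f, d2.adj.symm⟩
  have haq : d1.fst ∈ (p.takeUntil z hzp).support :=
    Walk.dart_fst_mem_support_of_mem_darts _ hd1
  have hbr : d2.snd ∈ (p.dropUntil z hzp).support :=
    Walk.dart_snd_mem_support_of_mem_darts _ hd2
  have haz : d1.fst ≠ z := fun hc => hzH (hc ▸ hd1f)
  have hbz : d2.snd ≠ z := fun hc => hzH (hc ▸ hbH)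
  have hab : d1.fst ≠ d2.snd :=
    fun hc => no_cross hp.1 hzp haq (by rw [hc]; exact hbr) haz
  have hadj : G.Adj d1.fst d2.snd := hcl haB hbB hab
  have hedge := hp.2 d1.fst d2.snd (Walk.support_takeUntil_subset p hzp haq)
    (Walk.support_dropUntil_subset p hzp hbr) hadj
  rw [← Walk.take_spec p hzp, Walk.edges_append, List.mem_append] at hedge
  rcases hedge with hq | hr
  · exact no_cross hp.1 hzp (Walk.snd_mem_support_of_mem_edges _ hq) hbr hbz
  · exact no_cross hp.1 hzp haq (Walk.fst_mem_support_of_mem_edges _ hr) haz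

lemma clique_border_of_halfspace (hG : G.Connected) {H : Set V}
    (hH : IsMHalfspace G H) : G.IsClique (border G H) := by
  intro a ha b hb hab
  obtain ⟨haH, a', ha', haa'⟩ := ha
  obtain ⟨hbH, b', hb', hbb'⟩ := hb
  by_contra hnadj
  obtain ⟨Q, hQ⟩ := exists_induced_path (hG.preconnected a' b')
  have hQsup : ∀ z ∈ Q.support, z ∉ H := by
    intro z hzQ
    by_cases hab' : a' = b'
    · subst hab'
      have hQnil : Q = Walk.nil := Walk.isPath_iff_eq_nil.mp hQ.1
      subst hQnil
      rw [Walk.mem_support_nil_iff] at hzQ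
      subst hzQ
      exact ha'
    · exact hH.2 a' ha' b' hb' ⟨hab', Q, hQ, hzQ⟩
  have hQrind := induced_reverse hQ
  have hnaQr : a ∉ Q.reverse.support := by
    rw [Walk.support_reverse, List.mem_reverse]
    exact fun hc => hQsup a hc haH
  obtain ⟨R, hRind, hRsup, hRlen⟩ := trim Q.reverse hQrind hnaQr
    ⟨a', Walk.end_mem_support _, haa'⟩
  have hRQ : ∀ x ∈ R.support, x = a ∨ x ∈ Q.support := by
    intro x hx
    rcases hRsup x hx with h | h
    · exact Or.inl h
    · right; rwa [Walk.support_reverse, List.mem_reverse] at h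
  have hnbR : b ∉ R.support := by
    intro hc
    rcases hRQ b hc with h | h
    · exact hab h.symm
    · exact hQsup b h hbH
  obtain ⟨S, hSind, hSsup, hSlen⟩ := trim R hRind hnbR
    ⟨b', Walk.end_mem_support _, hbb'⟩
  cases S with
  | nil => exact hab rfl
  | @cons _ mid _ hbw S₁ =>
    have hmidS : mid ∈ (Walk.cons hbw S₁).support := by simp
    rcases hSsup mid hmidS with h | h
    · exact hbw.ne' h
    · rcases hRQ mid h with h2 | h2
      · exact hnadj (by rw [← h2]; exact hbw.symm)
      · have hmidH : mid ∈ H :=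
          hH.1 b hbH a haH ⟨fun hc => hab hc.symm, Walk.cons hbw S₁, hSind, hmidS⟩
        exact hQsup mid h2 hmidH
end Helpers

/-- `H` is a monophonic halfspace of `G` iff the borders
`Γ(H)` and `Γ(V∖H)` induce cliques. -/

theorem mhalfspace_iff_borders_clique [Fintype V] (G : SimpleGraph V)
    (hG : G.Connected) (H : Set V) :
    IsMHalfspace G H ↔ G.IsClique (border G H) ∧ G.IsClique (border G Hᶜ) := by
  classical
  constructor
  · intro hH
    refine ⟨clique_border_of_halfspace hG hH, clique_border_of_halfspace hG ⟨hH.2, ?_⟩⟩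
    rw [compl_compl]
    exact hH.1
  · rintro ⟨h1, h2⟩
    exact ⟨convex_of_clique_border h1, convex_of_clique_border h2⟩
end

section
/- Let G = (V,E) be a finite simple connected graph and let H be a monophonic halfspace of G with H ≠ ∅ and H ≠ V. Then there exists a set C ⊆ δ(H) of at most ω(G) cut edges such that H = ⋃_{{z,v} ∈ C, z ∈ H} z/v, i.e., H is the union of at most ω(G) monophonic shadows z/v taken over cut edges {z,v} with z ∈ H and v ∉ H. -/
open SimpleGraph

variable {V : Type*}

section Aux

private lemma edge_mem_of_length_one_s2 {G : SimpleGraph V} {a b : V} (w : G.Walk a b)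
    (h : w.length = 1) : s(a, b) ∈ w.edges := by
  cases w with
  | nil => simp at h
  | cons hadj w' =>
    have h0 : w'.length = 0 := by simpa using h
    have := w'.eq_of_length_eq_zero h0
    subst this
    simp

private lemma chord_shortcut [DecidableEq V] {G : SimpleGraph V} {u w a b : V}
    (q : G.Walk u w) (ha : a ∈ q.support) (hb : b ∈ q.support) (hadj : G.Adj a b)
    (hne : s(a, b) ∉ q.edges) :
    ∃ r : G.Walk u w, r.length < q.length ∧ r.support ⊆ q.support := by
  set t := q.takeUntil a ha with ht
  set d := q.dropUntil a ha with hd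
  have hspec : t.append d = q := q.take_spec ha
  have hqlen : q.length = t.length + d.length := by
    conv_lhs => rw [← hspec]
    exact Walk.length_append _ _
  by_cases hbd : b ∈ d.support
  · -- b occurs after a
    set d2 := d.dropUntil b hbd with hd2
    have hdspec : (d.takeUntil b hbd).append d2 = d := d.take_spec hbd
    have hdlen : d.length = (d.takeUntil b hbd).length + d2.length := by
      conv_lhs => rw [← hdspec]
      exact Walk.length_append _ _
    have hk2 : 2 ≤ (d.takeUntil b hbd).length := by
      by_contra hlt
      push_neg at hlt
      interval_cases hkk : (d.takeUntil b hbd).length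
      · exact absurd ((d.takeUntil b hbd).eq_of_length_eq_zero hkk) hadj.ne
      · exact absurd (q.edges_dropUntil_subset ha
          (d.edges_takeUntil_subset hbd (edge_mem_of_length_one_s2 _ hkk))) hne
    refine ⟨t.append (Walk.cons hadj d2), ?_, ?_⟩
    · rw [Walk.length_append, Walk.length_cons]; omega
    · intro y hy
      rw [Walk.support_append] at hy
      rcases List.mem_append.mp hy with hy | hy
      · exact q.support_takeUntil_subset ha hy
      · have hy' : y ∈ (Walk.cons hadj d2).support := List.mem_of_mem_tail hy
        rw [Walk.support_cons, List.mem_cons] at hy'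
        rcases hy' with rfl | hy2
        · exact ha
        · exact q.support_dropUntil_subset ha (d.support_dropUntil_subset hbd hy2)
  · -- b occurs before a
    have hbt : b ∈ t.support := by
      have hyy := hb
      rw [← hspec, Walk.support_append] at hyy
      rcases List.mem_append.mp hyy with h1 | h1
      · exact h1
      · exact absurd (List.mem_of_mem_tail h1) hbd
    set t2 := t.takeUntil b hbt with ht2
    have htspec : t2.append (t.dropUntil b hbt) = t := t.take_spec hbt
    have htlen : t.length = t2.length + (t.dropUntil b hbt).length := by
      conv_lhs => rw [← htspec]
      exact Walk.length_append _ _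
    have hk2 : 2 ≤ (t.dropUntil b hbt).length := by
      by_contra hlt
      push_neg at hlt
      interval_cases hkk : (t.dropUntil b hbt).length
      · exact absurd ((t.dropUntil b hbt).eq_of_length_eq_zero hkk) hadj.ne'
      · have : s(b, a) ∈ q.edges := q.edges_takeUntil_subset ha
          (t.edges_dropUntil_subset hbt (edge_mem_of_length_one_s2 _ hkk))
        rw [Sym2.eq_swap] at this
        exact absurd this hne
    refine ⟨t2.append (Walk.cons hadj.symm d), ?_, ?_⟩
    · rw [Walk.length_append, Walk.length_cons]; omega
    · intro y hy
      rw [Walk.support_append] at hy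
      rcases List.mem_append.mp hy with hy | hy
      · exact q.support_takeUntil_subset ha (t.support_takeUntil_subset hbt hy)
      · have hy' : y ∈ (Walk.cons hadj.symm d).support := List.mem_of_mem_tail hy
        rw [Walk.support_cons, List.mem_cons] at hy'
        rcases hy' with rfl | hy2
        · exact q.support_takeUntil_subset ha hbt
        · exact q.support_dropUntil_subset ha hy2

private lemma exists_inducedPath_aux [DecidableEq V] (G : SimpleGraph V) (S : Set V)
    {u w : V} :
    ∀ (n : ℕ) (p : G.Walk u w), p.length ≤ n → (∀ y ∈ p.support, y ∈ S) →
      ∃ q : G.Walk u w, IsInducedPath G q ∧ ∀ y ∈ q.support, y ∈ S := by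
  intro n
  induction n with
  | zero =>
    intro p hlen hsup
    by_cases hchord : ∀ a ∈ p.bypass.support, ∀ b ∈ p.bypass.support,
        G.Adj a b → s(a, b) ∈ p.bypass.edges
    · exact ⟨p.bypass, ⟨p.bypass_isPath, fun a b hb1 hb2 hb3 => hchord a hb1 b hb2 hb3⟩,
        fun y hy => hsup y (p.support_bypass_subset hy)⟩
    · push_neg at hchord
      obtain ⟨a, ha, b, hb, hadj, hmem⟩ := hchord
      obtain ⟨r, hrlen, _⟩ := chord_shortcut _ ha hb hadj hmem
      have := p.length_bypass_le
      omega
  | succ m ih =>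
    intro p hlen hsup
    by_cases hchord : ∀ a ∈ p.bypass.support, ∀ b ∈ p.bypass.support,
        G.Adj a b → s(a, b) ∈ p.bypass.edges
    · exact ⟨p.bypass, ⟨p.bypass_isPath, fun a b hb1 hb2 hb3 => hchord a hb1 b hb2 hb3⟩,
        fun y hy => hsup y (p.support_bypass_subset hy)⟩
    · push_neg at hchord
      obtain ⟨a, ha, b, hb, hadj, hmem⟩ := hchord
      obtain ⟨r, hrlen, hrsub⟩ := chord_shortcut _ ha hb hadj hmem
      have hle := p.length_bypass_le
      exact ih r (by omega) fun y hy => hsup y (p.support_bypass_subset (hrsub hy))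

/-- Any walk with support inside `S` yields an induced path with support inside `S`. -/
private lemma exists_inducedPath [DecidableEq V] (G : SimpleGraph V) (S : Set V)
    {u w : V} (p : G.Walk u w) (hsup : ∀ y ∈ p.support, y ∈ S) :
    ∃ q : G.Walk u w, IsInducedPath G q ∧ ∀ y ∈ q.support, y ∈ S :=
  exists_inducedPath_aux G S p.length p le_rfl hsup

private lemma exists_cross_edge {G : SimpleGraph V} {H : Set V} :
    ∀ {a b : V} (_ : G.Walk a b), a ∈ H → b ∉ H →
      ∃ z v, G.Adj z v ∧ z ∈ H ∧ v ∉ H := by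
  intro a b p
  induction p with
  | nil => intro h1 h2; exact absurd h1 h2
  | @cons x y z h p ih =>
    intro h1 h2
    by_cases hy : y ∈ H
    · exact ih hy h2
    · exact ⟨x, y, h, h1, hy⟩

end Aux

/-- a nontrivial m-halfspace is the union of at most `ω(G)`
monophonic shadows over cut edges. -/
theorem mhalfspace_eq_union_cliqueNum_shadows [Fintype V] (G : SimpleGraph V)
    (hG : G.Connected) (H : Set V) (hH : IsMHalfspace G H)
    (hne : H ≠ ∅) (hnuniv : H ≠ Set.univ) :
    ∃ C : Set (V × V),
      (∀ p ∈ C, G.Adj p.1 p.2 ∧ p.1 ∈ H ∧ p.2 ∉ H) ∧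
      C.ncard ≤ G.cliqueNum ∧
      H = ⋃ p ∈ C, mShadow G p.1 p.2 := by
  classical
  obtain ⟨x0, hx0⟩ := Set.nonempty_iff_ne_empty.mpr hne
  obtain ⟨y0, hy0⟩ := (Set.ne_univ_iff_exists_notMem H).mp hnuniv
  obtain ⟨w0⟩ := hG.preconnected x0 y0
  obtain ⟨z0, v, hz0v, hz0, hv⟩ := exists_cross_edge w0 hx0 hy0
  -- the clique of neighbours of `v` inside `H`
  set K : Set V := G.neighborSet v ∩ H with hKdef
  have hz0K : z0 ∈ K := ⟨hz0v.symm, hz0⟩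
  -- K is a clique
  have hKclique : G.IsClique K := by
    intro a haK b hbK hab
    by_contra hnadj
    have hav : G.Adj a v := (haK.1 : G.Adj v a).symm
    have hvb : G.Adj v b := hbK.1
    set p : G.Walk a b := Walk.cons hav (Walk.cons hvb Walk.nil) with hp
    have hind : IsInducedPath G p := by
      constructor
      · rw [Walk.isPath_def]
        simp [hp, hav.ne, hvb.ne, hab]
      · intro c d hc hd hcd
        simp only [hp, Walk.support_cons, Walk.support_nil, List.mem_cons,
          List.mem_singleton, List.not_mem_nil, or_false] at hc hd
        simp only [hp, Walk.edges_cons, Walk.edges_nil, List.mem_cons,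
          List.mem_singleton, List.not_mem_nil, or_false]
        rcases hc with rfl | rfl | rfl <;> rcases hd with rfl | rfl | rfl
        · exact absurd hcd G.irrefl
        · exact Or.inl rfl
        · exact absurd hcd hnadj
        · exact Or.inl (Sym2.eq_swap)
        · exact absurd hcd G.irrefl
        · exact Or.inr rfl
        · exact absurd hcd (fun h => hnadj h.symm)
        · exact Or.inr (Sym2.eq_swap)
        · exact absurd hcd G.irrefl
    have hvmem : v ∈ mInterval G a b := ⟨hab, p, hind, by simp [hp]⟩
    exact hv (hH.1 a haK.2 b hbK.2 hvmem)
  -- the set of cut edges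
  refine ⟨(fun z => (z, v)) '' K, ?_, ?_, ?_⟩
  · rintro q ⟨z, hzK, rfl⟩
    exact ⟨(hzK.1 : G.Adj v z).symm, hzK.2, hv⟩
  · have hinj : Function.Injective (fun z : V => (z, v)) := by
      intro x y hxy
      simpa using congrArg Prod.fst hxy
    rw [Set.ncard_image_of_injective K hinj]
    have hfin : K.Finite := Set.toFinite K
    have hclique : G.IsClique (hfin.toFinset : Set V) := by
      rwa [Set.Finite.coe_toFinset]
    calc K.ncard = (hfin.toFinset).card := by
          rw [← Set.ncard_coe_finset, Set.Finite.coe_toFinset]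
      _ ≤ G.cliqueNum := SimpleGraph.IsClique.card_le_cliqueNum (tc := hclique)
  · apply Set.eq_of_subset_of_subset
    · -- H ⊆ union of shadows
      intro x hx
      -- an induced path from x to z0, necessarily inside H
      obtain ⟨w1⟩ := hG.preconnected x z0
      obtain ⟨q, hq, -⟩ := exists_inducedPath G Set.univ w1 (fun y _ => Set.mem_univ y)
      have hqH : ∀ y ∈ q.support, y ∈ H := by
        intro y hy
        by_cases hxz : x = z0
        · subst hxz
          have : q = Walk.nil := Walk.isPath_iff_eq_nil.mp hq.1
          subst this
          simp only [Walk.support_nil, List.mem_singleton] at hy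
          subst hy; exact hx
        · exact hH.1 x hx z0 hz0 ⟨hxz, q, hq, hy⟩
      -- extend by the edge z0–v and take an induced path in H ∪ {v}
      have hxv : x ≠ v := fun h => hv (h ▸ hx)
      have hp1 : ∀ y ∈ (q.concat hz0v).support, y ∈ insert v H := by
        intro y hy
        rw [Walk.support_concat] at hy
        rcases List.mem_append.mp hy with hy | hy
        · exact Set.mem_insert_of_mem _ (hqH y hy)
        · rw [List.mem_singleton] at hy
          subst hy; exact Set.mem_insert _ _
      obtain ⟨r, hr, hrS⟩ := exists_inducedPath G (insert v H) (q.concat hz0v) hp1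
      -- penultimate vertex of r
      obtain ⟨y, hvy, r', hr'⟩ := Walk.exists_eq_cons_of_ne (Ne.symm hxv) r.reverse
      have hyr : y ∈ r.support := by
        have : y ∈ r.reverse.support := by rw [hr']; simp
        rwa [Walk.support_reverse, List.mem_reverse] at this
      have hyH : y ∈ H := by
        rcases hrS y hyr with h | h
        · exact absurd h.symm hvy.ne
        · exact h
      have hyK : y ∈ K := ⟨hvy, hyH⟩
      refine Set.mem_biUnion (Set.mem_image_of_mem _ hyK) ?_
      exact ⟨hxv, r, hr, hyr⟩
    · -- union of shadows ⊆ H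
      intro x hx
      rw [Set.mem_iUnion₂] at hx
      obtain ⟨pq, hpqC, hshadow⟩ := hx
      obtain ⟨z', hz'K, rfl⟩ := hpqC
      obtain ⟨hxv, p, hp, hzp⟩ := hshadow
      by_contra hxH
      exact (hH.2 x hxH v hv ⟨hxv, p, hp, hzp⟩) hz'K.2
end

section
/- Let G = (V,E) be a finite simple connected graph with m = |E| edges and clique number ω(G). Then the number of monophonic halfspaces of G satisfies |ℋm(G)| ≤ 4·m·2^{ω(G)}/ω(G) + 2; equivalently, ω(G)·(|ℋm(G)| − 2) ≤ 4·m·2^{ω(G)}. -/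
open SimpleGraph

variable {V : Type*}

section AuxMono

variable {V : Type*} [DecidableEq V] {G : SimpleGraph V}

private lemma isInducedPath_nil {x : V} : IsInducedPath G (SimpleGraph.Walk.nil : G.Walk x x) := by
  constructor
  · exact SimpleGraph.Walk.IsPath.nil
  · intro a b ha hb hab
    simp only [SimpleGraph.Walk.support_nil, List.mem_singleton] at ha hb
    subst ha; subst hb
    exact absurd hab G.irrefl

/-- From any walk we can extract an induced path with the same endpoints whose
support is contained in that of the walk. -/
private lemma exists_induced_subwalk :
    ∀ (n : ℕ) {x y : V} (p : G.Walk x y), p.length ≤ n →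
      ∃ q : G.Walk x y, IsInducedPath G q ∧ (∀ z ∈ q.support, z ∈ p.support) ∧
        q.length ≤ p.length := by
  intro n
  induction n using Nat.strong_induction_on with
  | _ n ih =>
    intro x y p hlen
    obtain ⟨pb, hpb, hsub, hlb⟩ : ∃ pb : G.Walk x y, pb.IsPath ∧
        (∀ z ∈ pb.support, z ∈ p.support) ∧ pb.length ≤ p.length :=
      ⟨p.bypass, p.bypass_isPath, fun z hz => p.support_bypass_subset hz, p.length_bypass_le⟩
    cases pb with
    | nil =>
      refine ⟨SimpleGraph.Walk.nil, isInducedPath_nil, ?_, ?_⟩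
      · intro z hz
        exact hsub z hz
      · simp
    | @cons _ w _ h p' =>
      have hlcons : p'.length + 1 ≤ p.length := by
        simpa using hlb
      have hn1 : 1 ≤ n := le_trans (le_trans (by omega) hlcons) hlen
      have hpath' : p'.IsPath ∧ x ∉ p'.support := by
        rw [SimpleGraph.Walk.cons_isPath_iff] at hpb
        exact hpb
      obtain ⟨q', hq', hq'sub, hq'len⟩ :=
        ih (n - 1) (by omega) p' (by omega)
      have hxq' : x ∉ q'.support := fun hx => hpath'.2 (hq'sub x hx)
      by_cases hchord : ∃ b, b ∈ q'.support ∧ b ≠ w ∧ G.Adj x b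
      · obtain ⟨b, hb, hbw, hxb⟩ := hchord
        have hqd := q'.take_spec hb
        have hlen_split : (q'.takeUntil b hb).length + (q'.dropUntil b hb).length = q'.length := by
          have := congrArg SimpleGraph.Walk.length hqd
          rwa [SimpleGraph.Walk.length_append] at this
        have htpos : (q'.takeUntil b hb).length ≠ 0 := by
          intro h0
          exact hbw (SimpleGraph.Walk.eq_of_length_eq_zero h0).symm
        have hdl : (q'.dropUntil b hb).length < q'.length := by omega
        obtain ⟨q, hq, hqsub, hqlen⟩ :=
          ih (n - 1) (by omega) (SimpleGraph.Walk.cons hxb (q'.dropUntil b hb))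
            (by
              rw [SimpleGraph.Walk.length_cons]
              omega)
        refine ⟨q, hq, ?_, ?_⟩
        · intro z hz
          have := hqsub z hz
          rw [SimpleGraph.Walk.support_cons, List.mem_cons] at this
          rcases this with rfl | hz'
          · exact hsub z (SimpleGraph.Walk.start_mem_support _)
          · have : z ∈ q'.support := q'.support_dropUntil_subset hb hz'
            have : z ∈ p'.support := hq'sub z this
            exact hsub z (by
              rw [SimpleGraph.Walk.support_cons, List.mem_cons]; exact Or.inr this)
        · have : q.length ≤ (q'.dropUntil b hb).length + 1 := by
            simpa [SimpleGraph.Walk.length_cons] using hqlen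
          omega
      · push_neg at hchord
        refine ⟨SimpleGraph.Walk.cons h q', ⟨hq'.1.cons hxq', ?_⟩, ?_, ?_⟩
        · intro a b ha hb hab
          rw [SimpleGraph.Walk.support_cons, List.mem_cons] at ha hb
          rw [SimpleGraph.Walk.edges_cons, List.mem_cons]
          rcases ha with rfl | ha
          · rcases hb with rfl | hb
            · exact absurd hab G.irrefl
            · by_cases hbw : b = w
              · subst hbw; exact Or.inl rfl
              · exact absurd hab (hchord b hb hbw)
          · rcases hb with rfl | hb
            · by_cases haw : a = w
              · subst haw; exact Or.inl Sym2.eq_swap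
              · exact absurd hab.symm (hchord a ha haw)
            · exact Or.inr (hq'.2 a b ha hb hab)
        · intro z hz
          rw [SimpleGraph.Walk.support_cons, List.mem_cons] at hz
          rcases hz with rfl | hz
          · exact hsub z (SimpleGraph.Walk.start_mem_support _)
          · exact hsub z (by
              rw [SimpleGraph.Walk.support_cons, List.mem_cons]
              exact Or.inr (hq'sub z hz))
        · rw [SimpleGraph.Walk.length_cons]
          omega

/-- Inside a monophonically convex set, any two vertices are joined by a walk staying
in the set. -/
private lemma mconvex_walk (hp : G.Preconnected) {C : Set V} (hC : MConvex G C)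
    {x y : V} (hx : x ∈ C) (hy : y ∈ C) :
    ∃ w : G.Walk x y, ∀ z ∈ w.support, z ∈ C := by
  by_cases hxy : x = y
  · subst hxy
    exact ⟨SimpleGraph.Walk.nil, by simpa using hx⟩
  · obtain ⟨w0⟩ := hp x y
    obtain ⟨q, hq, hsub, -⟩ := exists_induced_subwalk w0.length w0 le_rfl
    exact ⟨q, fun z hz => hC x hx y hy ⟨hxy, q, hq, hz⟩⟩

private lemma exists_crossing_edge {S : Set V} :
    ∀ {a b : V} (p : G.Walk a b), a ∈ S → b ∉ S →
      ∃ c d, G.Adj c d ∧ c ∈ S ∧ d ∉ S ∧ c ∈ p.support ∧ d ∈ p.support := by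
  intro a b p
  induction p with
  | nil => exact fun ha hb => absurd ha hb
  | @cons a w b h p ih =>
    intro ha hb
    by_cases hw : w ∈ S
    · obtain ⟨c, d, h1, h2, h3, h4, h5⟩ := ih hw hb
      exact ⟨c, d, h1, h2, h3,
        by rw [SimpleGraph.Walk.support_cons, List.mem_cons]; exact Or.inr h4,
        by rw [SimpleGraph.Walk.support_cons, List.mem_cons]; exact Or.inr h5⟩
    · exact ⟨a, w, h, ha, hw, SimpleGraph.Walk.start_mem_support _,
        by rw [SimpleGraph.Walk.support_cons, List.mem_cons]
           exact Or.inr (SimpleGraph.Walk.start_mem_support _)⟩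

private lemma mem_mInterval_two_step {x y w : V} (hxy : x ≠ y) (hnadj : ¬G.Adj x y)
    (h1 : G.Adj x w) (h2 : G.Adj w y) : w ∈ mInterval G x y := by
  refine ⟨hxy, SimpleGraph.Walk.cons h1 (SimpleGraph.Walk.cons h2 SimpleGraph.Walk.nil),
    ⟨?_, ?_⟩, ?_⟩
  · refine SimpleGraph.Walk.IsPath.cons (SimpleGraph.Walk.IsPath.cons
      SimpleGraph.Walk.IsPath.nil ?_) ?_
    · simp [h2.ne]
    · simp [h1.ne, hxy]
  · intro a b ha hb hab
    simp only [SimpleGraph.Walk.support_cons, SimpleGraph.Walk.support_nil,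
      List.mem_cons, List.mem_singleton, List.not_mem_nil, or_false] at ha hb
    simp only [SimpleGraph.Walk.edges_cons, SimpleGraph.Walk.edges_nil, List.mem_cons,
      List.not_mem_nil, or_false]
    rcases ha with rfl | rfl | rfl <;> rcases hb with rfl | rfl | rfl
    · exact absurd hab G.irrefl
    · exact Or.inl rfl
    · exact absurd hab hnadj
    · exact Or.inl Sym2.eq_swap
    · exact absurd hab G.irrefl
    · exact Or.inr rfl
    · exact absurd hab.symm hnadj
    · exact Or.inr Sym2.eq_swap
    · exact absurd hab G.irrefl
  · simp

private lemma halfspace_flip {H : Set V} (hH : IsMHalfspace G H) {u v a b : V}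
    (hu : u ∈ H) (hv : v ∉ H) (hua : G.Adj u a) (hva : G.Adj v a) (hub : G.Adj u b)
    (hvb : G.Adj v b) (hab : ¬G.Adj a b) (hne : a ≠ b) : a ∈ H ↔ b ∉ H := by
  constructor
  · intro haH hbH
    exact hv (hH.1 a haH b hbH (mem_mInterval_two_step hne hab hva.symm hvb))
  · intro hbH
    by_contra haH
    exact (hH.2 a haH b hbH (mem_mInterval_two_step hne hab hua.symm hub)) hu

private lemma adj_of_convex {C : Set V} (hC : MConvex G C) {v c u : V} (hv : v ∉ C)
    (hc : c ∈ C) (hu : u ∈ C) (hvc : G.Adj v c) (hvu : G.Adj v u) (hcu : c ≠ u) :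
    G.Adj c u := by
  by_contra hadj
  exact hv (hC c hc u hu (mem_mInterval_two_step hcu hadj hvc.symm hvu))

/-- Two border vertices of the complement of a monophonic halfspace are adjacent. -/
private lemma border_adj (hg : G.Connected) {H : Set V} (hH : IsMHalfspace G H)
    {x y x' y' : V} (hx : x ∉ H) (hy : y ∉ H) (hxy : x ≠ y) (hx' : x' ∈ H) (hy' : y' ∈ H)
    (hax : G.Adj x x') (hay : G.Adj y y') : G.Adj x y := by
  by_contra hnadj
  obtain ⟨w0, hw0⟩ := mconvex_walk hg.preconnected hH.1 hx' hy'
  have hsupp : ∀ z ∈ (SimpleGraph.Walk.cons hax (w0.concat hay.symm)).support,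
      z = x ∨ z = y ∨ z ∈ H := by
    intro z hz
    rw [SimpleGraph.Walk.support_cons, List.mem_cons] at hz
    rcases hz with rfl | hz
    · exact Or.inl rfl
    · rw [SimpleGraph.Walk.support_concat, List.mem_append,
        List.mem_singleton] at hz
      rcases hz with hz | rfl
      · exact Or.inr (Or.inr (hw0 z hz))
      · exact Or.inr (Or.inl rfl)
  obtain ⟨q, hq, hqsub, -⟩ :=
    exists_induced_subwalk (SimpleGraph.Walk.cons hax (w0.concat hay.symm)).length
      (SimpleGraph.Walk.cons hax (w0.concat hay.symm)) le_rfl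
  cases q with
  | nil => exact hxy rfl
  | @cons _ z _ hadj q' =>
    by_cases hzy : z = y
    · subst hzy; exact hnadj hadj
    · have hzx : z ≠ x := by
        intro hzeq
        have := hq.1
        rw [SimpleGraph.Walk.cons_isPath_iff] at this
        exact this.2 (hzeq ▸ q'.start_mem_support)
      have hzmem : z ∈ (SimpleGraph.Walk.cons hadj q').support := by
        rw [SimpleGraph.Walk.support_cons, List.mem_cons]
        exact Or.inr q'.start_mem_support
      have hzH : z ∈ Hᶜ := hH.2 x hx y hy ⟨hxy, _, hq, hzmem⟩
      rcases hsupp z (hqsub z hzmem) with rfl | rfl | hmem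
      · exact hzx rfl
      · exact hzy rfl
      · exact hzH hmem

/-- A monophonic halfspace is determined by a cut edge and its trace on the common
neighbourhood of the two endpoints. -/
private lemma halfspace_subset (hg : G.Connected) {H H' : Set V} (hH : IsMHalfspace G H)
    (hH' : IsMHalfspace G H') {u v : V} (huv : G.Adj u v) (huH : u ∈ H) (huH' : u ∈ H')
    (hvH : v ∉ H) (hvH' : v ∉ H')
    (hiff : ∀ x, G.Adj u x → G.Adj v x → (x ∈ H ↔ x ∈ H')) : H ⊆ H' := by
  intro z hz
  by_contra hz'
  obtain ⟨w, hw⟩ := mconvex_walk hg.preconnected hH.1 hz huH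
  obtain ⟨c, d, hcd, hcS, hdS, hcw, hdw⟩ :=
    exists_crossing_edge (S := {t | t ∉ H'}) w hz' (fun hc => hc huH')
  have hcH : c ∈ H := hw c hcw
  have hdH' : d ∈ H' := not_not.mp hdS
  have hcv : c ≠ v := fun h => hvH (h ▸ hcH)
  have hadjcv : G.Adj c v := border_adj hg hH' hcS hvH' hcv hdH' huH' hcd huv.symm
  have hcu : c ≠ u := fun h => hcS (h ▸ huH')
  have hadjcu : G.Adj c u := adj_of_convex hH.1 hvH hcH huH hadjcv.symm huv.symm hcu
  exact hcS ((hiff c hadjcu.symm hadjcv.symm).mp hcH)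

private lemma halfspace_eq (hg : G.Connected) {H H' : Set V} (hH : IsMHalfspace G H)
    (hH' : IsMHalfspace G H') {u v : V} (huv : G.Adj u v) (huH : u ∈ H) (huH' : u ∈ H')
    (hvH : v ∉ H) (hvH' : v ∉ H')
    (hiff : ∀ x, G.Adj u x → G.Adj v x → (x ∈ H ↔ x ∈ H')) : H = H' :=
  Set.Subset.antisymm
    (halfspace_subset hg hH hH' huv huH huH' hvH hvH' hiff)
    (halfspace_subset hg hH' hH huv huH' huH hvH' hvH (fun x h1 h2 => (hiff x h1 h2).symm))

end AuxMono

section AuxCount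

variable {V : Type*} [Fintype V] [DecidableEq V]

open scoped Classical

private lemma arith_key {k s ω : ℕ} (hks : k ≤ s) (hkω : k ≤ ω) :
    2 ^ k * ω ≤ 2 * (s + 1) * 2 ^ ω := by
  obtain ⟨d, rfl⟩ := Nat.exists_eq_add_of_le hkω
  have h2d : d + 1 ≤ 2 ^ d := d.lt_two_pow_self
  have h1 : k + d ≤ 2 * (k + 1) * (d + 1) := by nlinarith
  calc 2 ^ k * (k + d) ≤ 2 ^ k * (2 * (k + 1) * (d + 1)) := Nat.mul_le_mul_left _ h1
    _ ≤ 2 ^ k * (2 * (s + 1) * 2 ^ d) := by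
        apply Nat.mul_le_mul_left
        apply Nat.mul_le_mul
        · exact Nat.mul_le_mul_left _ (by omega)
        · exact h2d
    _ = 2 * (s + 1) * 2 ^ (k + d) := by rw [pow_add]; ring

/-- Counting lemma: halfspaces cut by a fixed oriented edge are determined by their
trace on the common neighbourhood, and the number of possible traces is at most
`2 ^ k` where `k` is bounded by the clique number and by the size of the common
neighbourhood. -/
private lemma card_trace_le (G : SimpleGraph V) (hg : G.Connected) {u v : V}
    (huv : G.Adj u v) (N : Finset (Set V)) (hN : ∀ H ∈ N, IsMHalfspace G H) :
    ∃ k : ℕ, k ≤ G.cliqueNum ∧ k ≤ {x | G.Adj u x ∧ G.Adj v x}.ncard ∧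
      (N.filter (fun H => u ∈ H ∧ v ∉ H)).card ≤ 2 ^ k := by
  classical
  set Δ : Set V := {x | G.Adj u x ∧ G.Adj v x} with hΔdef
  let Gc : SimpleGraph Δ := (SimpleGraph.comap (Subtype.val : Δ → V) G)ᶜ
  haveI : Finite Gc.ConnectedComponent :=
    Finite.of_surjective Gc.connectedComponentMk (fun c => Quot.exists_rep c)
  haveI : Fintype Gc.ConnectedComponent := Fintype.ofFinite _
  have hout_inj : Function.Injective (Quot.out : Gc.ConnectedComponent → Δ) := by
    intro a b hab
    rw [← Quot.out_eq a, ← Quot.out_eq b, hab]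
  refine ⟨Fintype.card Gc.ConnectedComponent, ?_, ?_, ?_⟩
  · -- clique bound
    have hval_inj : Function.Injective
        (fun c : Gc.ConnectedComponent => ((Quot.out c : Δ) : V)) :=
      fun a b hab => hout_inj (Subtype.ext hab)
    set T : Finset V :=
      Finset.univ.image (fun c : Gc.ConnectedComponent => ((Quot.out c : Δ) : V)) with hT
    have hTcard : T.card = Fintype.card Gc.ConnectedComponent := by
      rw [hT, Finset.card_image_of_injective _ hval_inj, Finset.card_univ]
    have hclique : G.IsClique ↑T := by
      intro a ha b hb hab
      rw [hT, Finset.coe_image] at ha hb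
      obtain ⟨c1, -, rfl⟩ := ha
      obtain ⟨c2, -, rfl⟩ := hb
      by_contra hnadj
      have hne : (Quot.out c1 : Δ) ≠ Quot.out c2 := fun h => hab (congrArg Subtype.val h)
      have hadj : Gc.Adj (Quot.out c1) (Quot.out c2) := ⟨hne, fun h => hnadj h⟩
      have hcc : c1 = c2 := by
        rw [← Quot.out_eq c1, ← Quot.out_eq c2]
        exact SimpleGraph.ConnectedComponent.sound hadj.reachable
      exact hab (by rw [hcc])
    calc Fintype.card Gc.ConnectedComponent = T.card := hTcard.symm
      _ ≤ G.cliqueNum := SimpleGraph.IsClique.card_le_cliqueNum (tc := hclique)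
  · -- at most the size of the common neighbourhood
    have h1 : Fintype.card Gc.ConnectedComponent ≤ Fintype.card Δ :=
      Fintype.card_le_of_injective _ hout_inj
    rwa [Set.ncard_eq_toFinset_card', Set.toFinset_card]
  · -- injection into boolean functions on components
    have hcardle : (N.filter (fun H => u ∈ H ∧ v ∉ H)).card ≤
        (Finset.univ : Finset (Gc.ConnectedComponent → Bool)).card := by
      apply Finset.card_le_card_of_injOn
        (fun H => fun c : Gc.ConnectedComponent => decide (((Quot.out c : Δ) : V) ∈ H))
        (fun _ _ => Finset.mem_univ _)
      intro H1 h1 H2 h2 hfeq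
      rw [Finset.mem_coe, Finset.mem_filter] at h1 h2
      obtain ⟨h1N, hu1, hv1⟩ := h1
      obtain ⟨h2N, hu2, hv2⟩ := h2
      have hhs1 : IsMHalfspace G H1 := hN H1 h1N
      have hhs2 : IsMHalfspace G H2 := hN H2 h2N
      have step : ∀ (a b : Δ) (w : Gc.Walk a b),
          ((a : V) ∈ H1 ↔ (a : V) ∈ H2) → ((b : V) ∈ H1 ↔ (b : V) ∈ H2) := by
        intro a b w
        induction w with
        | nil => exact id
        | @cons a m b hadj w ih =>
          intro hiffa
          apply ih
          obtain ⟨hne, hnadj⟩ := hadj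
          have hvne : (a : V) ≠ (m : V) := fun h => hne (Subtype.ext h)
          have hflip1 := halfspace_flip hhs1 hu1 hv1 a.2.1 a.2.2 m.2.1 m.2.2 hnadj hvne
          have hflip2 := halfspace_flip hhs2 hu2 hv2 a.2.1 a.2.2 m.2.1 m.2.2 hnadj hvne
          tauto
      apply halfspace_eq hg hhs1 hhs2 huv hu1 hu2 hv1 hv2
      intro x hux hvx
      have hxΔ : x ∈ Δ := ⟨hux, hvx⟩
      set c := Gc.connectedComponentMk (⟨x, hxΔ⟩ : Δ) with hc
      have hreach : Gc.Reachable (Quot.out c) ⟨x, hxΔ⟩ :=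
        SimpleGraph.ConnectedComponent.eq.mp (Quot.out_eq c)
      obtain ⟨wcc⟩ := hreach
      have hstart : (((Quot.out c : Δ) : V) ∈ H1) ↔ (((Quot.out c : Δ) : V) ∈ H2) :=
        decide_eq_decide.mp (congrFun hfeq c)
      exact step _ _ wcc hstart
    rwa [Finset.card_univ, Fintype.card_fun, Fintype.card_bool] at hcardle

/-- The oriented cut of a set through an edge `(u,v)` has at least `|N(u)∩N(v)| + 1`
elements. -/
private lemma scard_lt_outcard (G : SimpleGraph V) {H : Set V} {u v : V}
    (huv : G.Adj u v) (hu : u ∈ H) (hv : v ∉ H) :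
    {x | G.Adj u x ∧ G.Adj v x}.ncard + 1 ≤
      (Finset.univ.filter (fun e : V × V => G.Adj e.1 e.2 ∧ e.1 ∈ H ∧ e.2 ∉ H)).card := by
  classical
  set Δfin : Finset V := Finset.univ.filter (fun x => G.Adj u x ∧ G.Adj v x) with hΔfin
  have hncard : {x | G.Adj u x ∧ G.Adj v x}.ncard = Δfin.card := by
    rw [← Set.ncard_coe_finset]
    congr 1
    ext x
    simp [hΔfin]
  set Q : Finset V := Δfin.filter (fun x => x ∈ H) with hQ
  set Q' : Finset V := Δfin.filter (fun x => x ∉ H) with hQ'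
  have hsplit : Q.card + Q'.card = Δfin.card :=
    Finset.card_filter_add_card_filter_not (p := fun x => x ∈ H)
  have hQprop : ∀ q ∈ Q, G.Adj u q ∧ G.Adj v q ∧ q ∈ H := by
    intro q hq
    rw [hQ, Finset.mem_filter, hΔfin, Finset.mem_filter] at hq
    exact ⟨hq.1.2.1, hq.1.2.2, hq.2⟩
  have hQ'prop : ∀ q ∈ Q', G.Adj u q ∧ G.Adj v q ∧ q ∉ H := by
    intro q hq
    rw [hQ', Finset.mem_filter, hΔfin, Finset.mem_filter] at hq
    exact ⟨hq.1.2.1, hq.1.2.2, hq.2⟩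
  set S : Finset (V × V) :=
    insert (u, v) ((Q.image fun q => (q, v)) ∪ (Q'.image fun q => (u, q))) with hS
  have hsub : S ⊆ Finset.univ.filter
      (fun e : V × V => G.Adj e.1 e.2 ∧ e.1 ∈ H ∧ e.2 ∉ H) := by
    intro e he
    rw [hS, Finset.mem_insert, Finset.mem_union] at he
    simp only [Finset.mem_filter, Finset.mem_univ, true_and]
    rcases he with rfl | he | he
    · exact ⟨huv, hu, hv⟩
    · obtain ⟨q, hq, rfl⟩ := Finset.mem_image.mp he
      obtain ⟨h1, h2, h3⟩ := hQprop q hq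
      exact ⟨h2.symm, h3, hv⟩
    · obtain ⟨q, hq, rfl⟩ := Finset.mem_image.mp he
      obtain ⟨h1, h2, h3⟩ := hQ'prop q hq
      exact ⟨h1, hu, h3⟩
  have hcard : Δfin.card + 1 ≤ S.card := by
    have hnotin : (u, v) ∉ (Q.image fun q => (q, v)) ∪ (Q'.image fun q => (u, q)) := by
      rw [Finset.mem_union]
      rintro (hmem | hmem)
      · obtain ⟨q, hq, heq⟩ := Finset.mem_image.mp hmem
        have hqu : q = u := congrArg Prod.fst heq
        exact (G.irrefl (v := u)) (hqu ▸ (hQprop q hq).1)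
      · obtain ⟨q, hq, heq⟩ := Finset.mem_image.mp hmem
        have hqv : q = v := congrArg Prod.snd heq
        exact (G.irrefl (v := v)) (hqv ▸ (hQ'prop q hq).2.1)
    have hdisj : Disjoint (Q.image fun q => (q, v)) (Q'.image fun q => (u, q)) := by
      rw [Finset.disjoint_left]
      rintro e hmem hmem'
      obtain ⟨q, hq, rfl⟩ := Finset.mem_image.mp hmem
      obtain ⟨q', hq', heq⟩ := Finset.mem_image.mp hmem'
      have : u = q := congrArg Prod.fst heq
      exact (G.irrefl (v := u)) (this ▸ (hQprop q hq).1)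
    have hinj1 : Function.Injective (fun q : V => (q, v)) :=
      fun a b h => congrArg Prod.fst h
    have hinj2 : Function.Injective (fun q : V => ((u, q) : V × V)) :=
      fun a b h => congrArg Prod.snd h
    rw [hS, Finset.card_insert_of_notMem hnotin, Finset.card_union_of_disjoint hdisj,
      Finset.card_image_of_injective _ hinj1, Finset.card_image_of_injective _ hinj2]
    omega
  rw [hncard]
  exact le_trans hcard (Finset.card_le_card hsub)

end AuxCount

/-- `ω(G)·(|ℋm(G)| − 2) ≤ 4·m·2^{ω(G)}`. -/
theorem card_mhalfspaces_le [Fintype V] (G : SimpleGraph V) (hG : G.Connected) :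
    G.cliqueNum * ({H : Set V | IsMHalfspace G H}.ncard - 2) ≤
      4 * G.edgeSet.ncard * 2 ^ G.cliqueNum := by
  classical
  haveI : Nonempty V := hG.nonempty
  set ω := G.cliqueNum with hω
  set N : Finset (Set V) := Finset.univ.filter
    (fun H => IsMHalfspace G H ∧ H.Nonempty ∧ Hᶜ.Nonempty) with hN
  have hconv_univ : MConvex G Set.univ := fun x _ y _ z _ => Set.mem_univ z
  have hconv_empty : MConvex G (∅ : Set V) := fun x hx => absurd hx (Set.notMem_empty x)
  have hhs_empty : IsMHalfspace G (∅ : Set V) :=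
    ⟨hconv_empty, by rw [Set.compl_empty]; exact hconv_univ⟩
  have hhs_univ : IsMHalfspace G (Set.univ : Set V) :=
    ⟨hconv_univ, by rw [Set.compl_univ]; exact hconv_empty⟩
  -- |ℋ| = |N| + 2
  have hiso : {H : Set V | IsMHalfspace G H}.ncard = N.card + 2 := by
    have h1 : {H : Set V | IsMHalfspace G H}.ncard =
        (Finset.univ.filter (fun H : Set V => IsMHalfspace G H)).card := by
      rw [Set.ncard_eq_toFinset_card']
      congr 1
      ext H
      simp
    have h2 := Finset.card_filter_add_card_filter_not
      (s := Finset.univ.filter (fun H : Set V => IsMHalfspace G H))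
      (p := fun H => H.Nonempty ∧ Hᶜ.Nonempty)
    have hfilterN : (Finset.univ.filter (fun H : Set V => IsMHalfspace G H)).filter
        (fun H => H.Nonempty ∧ Hᶜ.Nonempty) = N := by
      rw [hN, Finset.filter_filter]
    have htriv : (Finset.univ.filter (fun H : Set V => IsMHalfspace G H)).filter
        (fun H => ¬(H.Nonempty ∧ Hᶜ.Nonempty)) = ({∅, Set.univ} : Finset (Set V)) := by
      ext A
      simp only [Finset.mem_filter, Finset.mem_univ, true_and, Finset.mem_insert,
        Finset.mem_singleton]
      constructor
      · rintro ⟨hhs, hnt⟩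
        rw [not_and_or, Set.not_nonempty_iff_eq_empty, Set.not_nonempty_iff_eq_empty] at hnt
        rcases hnt with h | h
        · exact Or.inl h
        · exact Or.inr (by rwa [Set.compl_empty_iff] at h)
      · rintro (rfl | rfl)
        · exact ⟨hhs_empty, fun h => Set.not_nonempty_empty h.1⟩
        · exact ⟨hhs_univ, fun h => Set.not_nonempty_empty (Set.compl_univ ▸ h.2)⟩
    have hcard2 : ({∅, Set.univ} : Finset (Set V)).card = 2 := by
      rw [Finset.card_insert_of_notMem (by simp [Set.empty_ne_univ]),
        Finset.card_singleton]
    rw [h1, ← h2, hfilterN, htriv, hcard2]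
  -- oriented edges
  set Eor : Finset (V × V) := Finset.univ.filter (fun e : V × V => G.Adj e.1 e.2) with hEor
  have hEcard : Eor.card = 2 * G.edgeSet.ncard := by
    have h1 : G.edgeSet.ncard = G.edgeFinset.card := by
      rw [Set.ncard_eq_toFinset_card', Set.toFinset_card]
      convert G.edgeFinset_card.symm
    have hdart : (Finset.univ : Finset G.Dart).card = Eor.card := by
      apply Finset.card_bij (fun d _ => d.toProd)
      · intro d _
        rw [hEor, Finset.mem_filter]
        exact ⟨Finset.mem_univ _, d.adj⟩
      · intro d1 _ d2 _ heq
        exact SimpleGraph.Dart.ext _ _ heq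
      · intro e he
        rw [hEor, Finset.mem_filter] at he
        exact ⟨⟨e, he.2⟩, Finset.mem_univ _, rfl⟩
    rw [h1, ← SimpleGraph.dart_card_eq_twice_card_edges, ← Finset.card_univ, hdart]
  set sfun : V × V → ℕ := fun e => {x | G.Adj e.1 x ∧ G.Adj e.2 x}.ncard with hsfun
  set out : Set V → Finset (V × V) :=
    fun H => Eor.filter (fun e => e.1 ∈ H ∧ e.2 ∉ H) with hout
  set F : V × V → Finset (Set V) :=
    fun e => N.filter (fun H => e.1 ∈ H ∧ e.2 ∉ H) with hF
  have houtfull : ∀ H : Set V, out H = Finset.univ.filter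
      (fun e : V × V => G.Adj e.1 e.2 ∧ e.1 ∈ H ∧ e.2 ∉ H) := by
    intro H
    simp only [hout, hEor, Finset.filter_filter]
  have hNprop : ∀ H ∈ N, IsMHalfspace G H ∧ H.Nonempty ∧ Hᶜ.Nonempty :=
    fun H hH => (Finset.mem_filter.mp hH).2
  have hscard : ∀ H ∈ N, ∀ e ∈ out H, sfun e + 1 ≤ (out H).card := by
    intro H hH e he
    rw [hout, Finset.mem_filter] at he
    obtain ⟨heor, h1, h2⟩ := he
    have hadj : G.Adj e.1 e.2 := (Finset.mem_filter.mp heor).2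
    have := scard_lt_outcard G hadj h1 h2
    rw [houtfull H]
    exact this
  have houtne : ∀ H ∈ N, 0 < (out H).card := by
    intro H hH
    obtain ⟨hhs, ⟨a, ha⟩, ⟨b, hb⟩⟩ := hNprop H hH
    obtain ⟨w⟩ := hG.preconnected a b
    obtain ⟨c, d, hcd, hc, hd, -, -⟩ := exists_crossing_edge (S := H) w ha hb
    refine Finset.card_pos.mpr ⟨(c, d), ?_⟩
    rw [hout, Finset.mem_filter, hEor, Finset.mem_filter]
    exact ⟨⟨Finset.mem_univ _, hcd⟩, hc, hd⟩
  have hperedge : ∀ e ∈ Eor, (F e).card * ω ≤ 2 * (sfun e + 1) * 2 ^ ω := by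
    intro e he
    have hadj : G.Adj e.1 e.2 := (Finset.mem_filter.mp he).2
    obtain ⟨k, hkω, hks, hFk⟩ := card_trace_le G hG hadj N
      (fun H hH => (hNprop H hH).1)
    calc (F e).card * ω ≤ 2 ^ k * ω := Nat.mul_le_mul_right _ hFk
      _ ≤ 2 * (sfun e + 1) * 2 ^ ω := arith_key hks hkω
  -- the rational chain
  have hQ : (ω : ℚ) * N.card ≤ 2 * Eor.card * 2 ^ ω := by
    have hstep1 : (ω : ℚ) * N.card = ∑ H ∈ N, (ω : ℚ) := by
      rw [Finset.sum_const, nsmul_eq_mul, mul_comm]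
    rw [hstep1]
    have hstep2 : ∀ H ∈ N, (ω : ℚ) ≤ ∑ e ∈ out H, (ω : ℚ) / (sfun e + 1) := by
      intro H hH
      have hpos : (0 : ℚ) < ((out H).card : ℚ) := by exact_mod_cast houtne H hH
      have heq : (ω : ℚ) = ∑ e ∈ out H, (ω : ℚ) / ((out H).card : ℚ) := by
        rw [Finset.sum_const, nsmul_eq_mul]
        field_simp
      refine le_trans (le_of_eq heq) (Finset.sum_le_sum ?_)
      intro e he
      have h1 : ((sfun e : ℚ) + 1) ≤ ((out H).card : ℚ) := by
        exact_mod_cast hscard H hH e he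
      exact div_le_div_of_nonneg_left (Nat.cast_nonneg ω) (by positivity) h1
    calc ∑ H ∈ N, (ω : ℚ)
        ≤ ∑ H ∈ N, ∑ e ∈ out H, (ω : ℚ) / (sfun e + 1) := Finset.sum_le_sum hstep2
      _ = ∑ e ∈ Eor, ∑ H ∈ F e, (ω : ℚ) / (sfun e + 1) := by
          have h1 : ∀ H ∈ N, ∑ e ∈ out H, (ω : ℚ) / (sfun e + 1)
              = ∑ e ∈ Eor, if e.1 ∈ H ∧ e.2 ∉ H then (ω : ℚ) / (sfun e + 1) else 0 := by
            intro H _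
            rw [hout, Finset.sum_filter]
          rw [Finset.sum_congr rfl h1, Finset.sum_comm]
          apply Finset.sum_congr rfl
          intro e _
          simp only [hF, hN, Finset.sum_filter]
      _ ≤ ∑ _e ∈ Eor, 2 * 2 ^ (ω : ℕ) := by
          apply Finset.sum_le_sum
          intro e he
          rw [Finset.sum_const, nsmul_eq_mul]
          have hpos : (0 : ℚ) < (sfun e : ℚ) + 1 := by positivity
          calc ((F e).card : ℚ) * ((ω : ℚ) / (sfun e + 1))
              = (((F e).card * ω : ℕ) : ℚ) / ((sfun e : ℚ) + 1) := by
                push_cast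
                ring
            _ ≤ ((2 * (sfun e + 1) * 2 ^ ω : ℕ) : ℚ) / ((sfun e : ℚ) + 1) := by
                apply div_le_div_of_nonneg_right ?_ hpos.le
                exact_mod_cast hperedge e he
            _ = 2 * 2 ^ (ω : ℕ) := by
                push_cast
                field_simp
      _ = 2 * Eor.card * 2 ^ (ω : ℕ) := by
          rw [Finset.sum_const, nsmul_eq_mul]
          ring
  rw [hiso, Nat.add_sub_cancel]
  have hfin : ω * N.card ≤ 4 * G.edgeSet.ncard * 2 ^ ω := by
    have h4 : (2 : ℚ) * (Eor.card : ℚ) * 2 ^ (ω : ℕ)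
        = ((4 * G.edgeSet.ncard * 2 ^ ω : ℕ) : ℚ) := by
      rw [hEcard]
      push_cast
      ring
    have := hQ.trans_eq h4
    exact_mod_cast this
  exact hfin
end

section
/- Let G = (V,E) be a finite simple connected graph, let H be a monophonic halfspace of G, and let C be an induced cycle of G on at least 5 vertices. Then C is monochromatic with respect to H: either all vertices of C lie in H, or all vertices of C lie in V∖H. -/
open SimpleGraph

variable {V : Type*}

section AuxLemmas
variable {G : SimpleGraph V}


lemma pathEdgeStart {x y u : V} (p : G.Walk x y) (hp : p.IsPath)
    (he : s(x, u) ∈ p.edges) : ∃ (h : G.Adj x u) (r : G.Walk u y), p = Walk.cons h r := by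
  cases p with
  | nil => simp at he
  | cons h r =>
    rename_i z
    rw [Walk.edges_cons, List.mem_cons] at he
    rcases he with he | he
    · rw [Sym2.eq_iff] at he
      rcases he with ⟨-, rfl⟩ | ⟨rfl, rfl⟩
      · exact ⟨h, r, rfl⟩
      · exact absurd rfl h.ne
    · exact absurd (r.fst_mem_support_of_mem_edges he)
        ((Walk.cons_isPath_iff h r).mp hp).2

lemma pathEdgeEnds {x y : V} (p : G.Walk x y) (hp : p.IsPath)
    (he : s(x, y) ∈ p.edges) : p.length = 1 := by
  obtain ⟨h, r, rfl⟩ := pathEdgeStart p hp he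
  have hr : r.IsPath := ((Walk.cons_isPath_iff h r).mp hp).1
  have : r = Walk.nil := by
    have := SimpleGraph.Path.loop_eq ⟨r, hr⟩
    simpa [SimpleGraph.Path.nil] using congrArg Subtype.val this
  simp [this]

lemma pathTwoEnds {x y u : V} (p : G.Walk x y) (hp : p.IsPath) (hxy : x ≠ y)
    (h1 : s(x, u) ∈ p.edges) (h2 : s(y, u) ∈ p.edges) : p.length = 2 := by
  obtain ⟨h, r, rfl⟩ := pathEdgeStart p hp h1
  have hr : r.IsPath := ((Walk.cons_isPath_iff h r).mp hp).1
  rw [Walk.edges_cons, List.mem_cons] at h2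
  rcases h2 with h2 | h2
  · rw [Sym2.eq_iff] at h2
    rcases h2 with ⟨rfl, -⟩ | ⟨rfl, rfl⟩
    · exact absurd rfl hxy
    · exact absurd rfl h.ne
  · have := pathEdgeEnds r hr (by rwa [Sym2.eq_swap] at h2)
    simp [this]

lemma end_mem_support_tail {w : V} (c : G.Walk w w) (h : ¬c.Nil) : w ∈ c.support.tail := by
  cases c with
  | nil => simp at h
  | cons h' r => simp

variable [DecidableEq V]

lemma mem_support_rotate_iff {w x : V} (c : G.Walk w w) (hx : x ∈ c.support) (hnil : ¬c.Nil)
    (z : V) : z ∈ (c.rotate x hx).support ↔ z ∈ c.support := by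
  have ht := (Walk.support_rotate c x hx).mem_iff (a := z)
  constructor
  · intro hz
    rw [(c.rotate x hx).support_eq_cons, List.mem_cons] at hz
    rcases hz with rfl | hz
    · exact hx
    · exact List.mem_of_mem_tail (ht.mp hz)
  · intro hz
    rw [c.support_eq_cons, List.mem_cons] at hz
    rcases hz with rfl | hz
    · exact List.mem_of_mem_tail (ht.mpr (end_mem_support_tail c hnil))
    · exact List.mem_of_mem_tail (ht.mpr hz)

lemma length_rotate' {w x : V} (c : G.Walk w w) (hx : x ∈ c.support) :
    (c.rotate x hx).length = c.length := by
  conv_rhs => rw [← c.take_spec hx]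
  rw [Walk.rotate, Walk.length_append, Walk.length_append, Nat.add_comm]

lemma cycle_split {x y : V} (c : G.Walk x x) (hc : c.IsCycle) (hy : y ∈ c.support)
    (hyx : y ≠ x) :
    ∃ (p : G.Walk x y) (q : G.Walk y x),
      c.support = p.support ++ q.support.tail ∧
      c.edges = p.edges ++ q.edges ∧
      c.length = p.length + q.length ∧
      p.IsPath ∧ q.IsPath ∧
      p.support ⊆ c.support ∧ q.support ⊆ c.support ∧
      ∀ z, z ∈ p.support → z ∈ q.support → z = x ∨ z = y := by
  set p := c.takeUntil y hy with hpdef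
  set q := c.dropUntil y hy with hqdef
  have hspec : p.append q = c := c.take_spec hy
  have hsupp : c.support = p.support ++ q.support.tail := by
    conv_lhs => rw [← hspec]
    exact Walk.support_append p q
  have hedges : c.edges = p.edges ++ q.edges := by
    conv_lhs => rw [← hspec]
    exact Walk.edges_append p q
  have hlen : c.length = p.length + q.length := by
    conv_lhs => rw [← hspec]
    exact Walk.length_append p q
  have htail : c.support.tail = p.support.tail ++ q.support.tail := by
    rw [hsupp, p.support_eq_cons]
    rfl
  have hnd : (p.support.tail ++ q.support.tail).Nodup := htail ▸ hc.support_nodup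
  rw [List.nodup_append] at hnd
  obtain ⟨hndp, hndq, hdisj⟩ := hnd
  have hxq : x ∈ q.support.tail := by
    have := q.end_mem_support
    rw [q.support_eq_cons, List.mem_cons] at this
    rcases this with h | h
    · exact absurd h.symm hyx
    · exact h
  have hyp : y ∈ p.support.tail := by
    have := p.end_mem_support
    rw [p.support_eq_cons, List.mem_cons] at this
    rcases this with h | h
    · exact absurd h hyx
    · exact h
  have hxp : x ∉ p.support.tail := fun hx' => hdisj x hx' x hxq rfl
  have hyq : y ∉ q.support.tail := fun hy' => hdisj y hyp y hy' rfl
  have hpPath : p.IsPath := by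
    rw [Walk.isPath_def, p.support_eq_cons]
    exact List.nodup_cons.mpr ⟨hxp, hndp⟩
  have hqPath : q.IsPath := by
    rw [Walk.isPath_def, q.support_eq_cons]
    exact List.nodup_cons.mpr ⟨hyq, hndq⟩
  refine ⟨p, q, hsupp, hedges, hlen, hpPath, hqPath,
    Walk.support_takeUntil_subset c hy, Walk.support_dropUntil_subset c hy, ?_⟩
  intro z hzp hzq
  rw [p.support_eq_cons, List.mem_cons] at hzp
  rw [q.support_eq_cons, List.mem_cons] at hzq
  rcases hzp with rfl | hzp
  · exact Or.inl rfl
  · rcases hzq with rfl | hzq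
    · exact Or.inr rfl
    · exact absurd hzq (fun h => hdisj z hzp z h rfl)

lemma cycle_subset_mInterval [DecidableEq V] {w x y : V} (c : G.Walk w w) (hc : c.IsCycle)
    (hchordfree : ∀ a b : V, a ∈ c.support → b ∈ c.support → G.Adj a b → s(a, b) ∈ c.edges)
    (hx : x ∈ c.support) (hy : y ∈ c.support) (hxy : x ≠ y) (hnadj : ¬G.Adj x y) :
    ∀ z ∈ c.support, z ∈ mInterval G x y := by
  set c₁ := c.rotate x hx with hc1
  have hnil := hc.not_nil
  have hmem : ∀ z, z ∈ c₁.support ↔ z ∈ c.support := mem_support_rotate_iff c hx hnil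
  have hedge : ∀ e, e ∈ c₁.edges ↔ e ∈ c.edges := fun e => (Walk.rotate_edges c x hx).mem_iff
  obtain ⟨p, q, hsupp, hedges, hlen2, hp, hq, hps, hqs, hint⟩ :=
    cycle_split c₁ (hc.rotate hx) ((hmem y).mpr hy) hxy.symm
  have chord : ∀ a b : V, a ∈ c₁.support → b ∈ c₁.support → G.Adj a b → s(a, b) ∈ c₁.edges :=
    fun a b ha hb hab => (hedge _).mpr (hchordfree a b ((hmem a).mp ha) ((hmem b).mp hb) hab)
  have inP : ∀ a b : V, a ∈ p.support → b ∈ p.support → G.Adj a b → s(a, b) ∈ p.edges := by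
    intro a b hap hbp hab
    have h := chord a b (hps hap) (hps hbp) hab
    rw [hedges, List.mem_append] at h
    rcases h with h | h
    · exact h
    · have haq := q.fst_mem_support_of_mem_edges h
      have hbq := q.snd_mem_support_of_mem_edges h
      rcases hint a hap haq with rfl | rfl <;> rcases hint b hbp hbq with rfl | rfl
      · exact absurd rfl hab.ne
      · exact absurd hab hnadj
      · exact absurd hab.symm hnadj
      · exact absurd rfl hab.ne
  have inQ : ∀ a b : V, a ∈ q.support → b ∈ q.support → G.Adj a b → s(a, b) ∈ q.edges := by
    intro a b haq hbq hab
    have h := chord a b (hqs haq) (hqs hbq) hab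
    rw [hedges, List.mem_append] at h
    rcases h with h | h
    · have hap := p.fst_mem_support_of_mem_edges h
      have hbp := p.snd_mem_support_of_mem_edges h
      rcases hint a hap haq with rfl | rfl <;> rcases hint b hbp hbq with rfl | rfl
      · exact absurd rfl hab.ne
      · exact absurd hab hnadj
      · exact absurd hab.symm hnadj
      · exact absurd rfl hab.ne
    · exact h
  intro z hz
  have hz1 : z ∈ c₁.support := (hmem z).mpr hz
  rw [hsupp, List.mem_append] at hz1
  rcases hz1 with hz1 | hz1
  · exact ⟨hxy, p, ⟨hp, inP⟩, hz1⟩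
  · refine ⟨hxy, q.reverse, ⟨hq.reverse, ?_⟩, ?_⟩
    · intro a b ha hb hab
      rw [Walk.support_reverse, List.mem_reverse] at ha hb
      rw [Walk.edges_reverse, List.mem_reverse]
      exact inQ a b ha hb hab
    · rw [Walk.support_reverse, List.mem_reverse]
      exact List.mem_of_mem_tail hz1

lemma no_triangle_in_cycle [DecidableEq V] {w a b d : V} (c : G.Walk w w) (hc : c.IsCycle)
    (hlen : 5 ≤ c.length) (ha : a ∈ c.support)
    (hab : a ≠ b) (had : a ≠ d) (hbd : b ≠ d)
    (e1 : s(a, b) ∈ c.edges) (e2 : s(a, d) ∈ c.edges) (e3 : s(b, d) ∈ c.edges) : False := by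
  set c₁ := c.rotate a ha with hc1
  have hlen1 : c₁.length = c.length := length_rotate' c ha
  have hedge : ∀ e, e ∈ c₁.edges ↔ e ∈ c.edges := fun e => (Walk.rotate_edges c a ha).mem_iff
  have hb1 : b ∈ c₁.support :=
    (mem_support_rotate_iff c ha hc.not_nil b).mpr (c.snd_mem_support_of_mem_edges e1)
  obtain ⟨p, q, -, hedges, hlen2, hp, hq, -, -, -⟩ :=
    cycle_split c₁ (hc.rotate ha) hb1 (Ne.symm hab)
  have huniq : ∀ {l : List (Sym2 V)}, l.length = 1 → ∀ {e f : Sym2 V}, e ∈ l → f ∈ l → e = f := by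
    intro l hl e f he hf
    obtain ⟨x, rfl⟩ := List.length_eq_one_iff.mp hl
    simp only [List.mem_singleton] at he hf
    rw [he, hf]
  have h1 : s(a, b) ∈ c₁.edges := (hedge _).mpr e1
  have h2 : s(a, d) ∈ c₁.edges := (hedge _).mpr e2
  have h3 : s(b, d) ∈ c₁.edges := (hedge _).mpr e3
  rw [hedges, List.mem_append] at h1 h2 h3
  rcases h1 with h1 | h1
  · -- s(a,b) is the single edge of p
    have hp1 : p.length = 1 := pathEdgeEnds p hp h1
    have hpl : p.edges.length = 1 := by rw [Walk.length_edges, hp1]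
    have h2' : s(a, d) ∈ q.edges := by
      rcases h2 with h2 | h2
      · have := huniq hpl h2 h1
        rw [Sym2.eq_iff] at this
        rcases this with ⟨-, h⟩ | ⟨h, -⟩
        · exact absurd h.symm hbd
        · exact absurd h hab
      · exact h2
    have h3' : s(b, d) ∈ q.edges := by
      rcases h3 with h3 | h3
      · have := huniq hpl h3 h1
        rw [Sym2.eq_iff] at this
        rcases this with ⟨h, -⟩ | ⟨-, h⟩
        · exact absurd h.symm hab
        · exact absurd h.symm had
      · exact h3
    have hq2 : q.length = 2 := pathTwoEnds q hq (Ne.symm hab) h3' h2'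
    omega
  · -- s(a,b) is the single edge of q
    have hq1 : q.length = 1 := pathEdgeEnds q hq (by rwa [Sym2.eq_swap] at h1)
    have hql : q.edges.length = 1 := by rw [Walk.length_edges, hq1]
    have h2' : s(a, d) ∈ p.edges := by
      rcases h2 with h2 | h2
      · exact h2
      · have := huniq hql h2 h1
        rw [Sym2.eq_iff] at this
        rcases this with ⟨-, h⟩ | ⟨h, -⟩
        · exact absurd h.symm hbd
        · exact absurd h hab
    have h3' : s(b, d) ∈ p.edges := by
      rcases h3 with h3 | h3
      · exact h3
      · have := huniq hql h3 h1
        rw [Sym2.eq_iff] at this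
        rcases this with ⟨h, -⟩ | ⟨-, h⟩
        · exact absurd h.symm hab
        · exact absurd h.symm had
    have hp2 : p.length = 2 := pathTwoEnds p hp hab h2' h3'
    omega

end AuxLemmas

/-- an induced cycle on at least 5 vertices is monochromatic with
respect to any monophonic halfspace `H`. -/
theorem induced_long_cycle_monochromatic [Fintype V] (G : SimpleGraph V)
    (hG : G.Connected) (H : Set V) (hH : IsMHalfspace G H)
    (w : V) (c : G.Walk w w) (hc : c.IsCycle)
    (hchordfree : ∀ a b : V, a ∈ c.support → b ∈ c.support → G.Adj a b →
      s(a, b) ∈ c.edges)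
    (hlen : 5 ≤ c.length) :
    (∀ x ∈ c.support, x ∈ H) ∨ (∀ x ∈ c.support, x ∉ H) := by
    classical
  by_contra hcon
  push_neg at hcon
  obtain ⟨⟨u, hu, huH⟩, v, hv, hvH⟩ := hcon
  have hAdjH : ∀ x ∈ c.support, ∀ y ∈ c.support, x ∈ H → y ∈ H → x ≠ y → G.Adj x y := by
    intro x hx y hy hxH hyH hxy
    by_contra hnadj
    exact huH (hH.1 x hxH y hyH
      (cycle_subset_mInterval c hc hchordfree hx hy hxy hnadj u hu))
  have hAdjH' : ∀ x ∈ c.support, ∀ y ∈ c.support, x ∉ H → y ∉ H → x ≠ y → G.Adj x y := by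
    intro x hx y hy hxH hyH hxy
    by_contra hnadj
    exact (hH.2 x hxH y hyH
      (cycle_subset_mInterval c hc hchordfree hx hy hxy hnadj v hv)) hvH
  set l := c.support.tail with hl
  have hnd : l.Nodup := hc.support_nodup
  have hlenl : l.length = c.length := by
    rw [hl, List.length_tail, c.length_support]
    omega
  have hsub : ∀ x ∈ l, x ∈ c.support := fun x hx => List.mem_of_mem_tail hx
  have hcard : ∀ (P : V → Prop) [DecidablePred P],
      (∀ x ∈ c.support, ∀ y ∈ c.support, P x → P y → x ≠ y → G.Adj x y) →
      (l.toFinset.filter P).card ≤ 2 := by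
    intro P _ hP
    by_contra hgt
    push_neg at hgt
    have hpos : 0 < (l.toFinset.filter P).card := by omega
    obtain ⟨a, haS⟩ := Finset.card_pos.mp hpos
    have h1lt : 1 < ((l.toFinset.filter P).erase a).card := by
      rw [Finset.card_erase_of_mem haS]; omega
    obtain ⟨b, hbS, d, hdS, hbd⟩ := Finset.one_lt_card.mp h1lt
    have hba : b ≠ a := (Finset.mem_erase.mp hbS).1
    have hda : d ≠ a := (Finset.mem_erase.mp hdS).1
    have hb' : b ∈ l.toFinset.filter P := (Finset.mem_erase.mp hbS).2
    have hd' : d ∈ l.toFinset.filter P := (Finset.mem_erase.mp hdS).2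
    simp only [Finset.mem_filter, List.mem_toFinset] at haS hb' hd'
    have hac := hsub a haS.1
    have hbc := hsub b hb'.1
    have hdc := hsub d hd'.1
    have adjab := hP a hac b hbc haS.2 hb'.2 (Ne.symm hba)
    have adjad := hP a hac d hdc haS.2 hd'.2 (Ne.symm hda)
    have adjbd := hP b hbc d hdc hb'.2 hd'.2 hbd
    exact no_triangle_in_cycle c hc hlen hac (Ne.symm hba) (Ne.symm hda) hbd
      (hchordfree a b hac hbc adjab) (hchordfree a d hac hdc adjad)
      (hchordfree b d hbc hdc adjbd)
  have h1 : (l.toFinset.filter (fun x => x ∈ H)).card ≤ 2 := hcard _ hAdjH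
  have h2 : (l.toFinset.filter (fun x => ¬(x ∈ H))).card ≤ 2 := hcard _ hAdjH'
  have hcards : l.toFinset.card = l.length := List.toFinset_card_of_nodup hnd
  have hsum := Finset.card_filter_add_card_filter_not
    (s := l.toFinset) (p := fun x => x ∈ H)
  omega
end
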